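/- Let n ≥ 1 and let w_1, …, w_n ∈ ℤ^n be linearly independent over ℚ. Let A be the subgroup of ℤ^n generated by w_1, …, w_{n−1}, let M = span_ℚ{w_1, …, w_{n−1}} ∩ ℤ^n be its saturation, and let B be the subgroup of ℤ^n generated by w_1, …, w_n. Then the index [M : A] is finite and divides the (finite) index [ℤ^n : B]. -/

import Mathlib

section Aux

variable {n : ℕ}

/-- The coercion map `ℤⁿ → ℚⁿ` as a `ℤ`-linear map. -/
def coeMapQ (n : ℕ) : (Fin n → ℤ) →ₗ[ℤ] (Fin n → ℚ) where
  toFun x := fun j => (x j : ℚ)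
  map_add' x y := by funext j; simp
  map_smul' c x := by funext j; simp [zsmul_eq_mul]

lemma coeMapQ_injective (n : ℕ) : Function.Injective (coeMapQ n) := by
  intro x y h
  funext j
  have := congrFun h j
  simpa [coeMapQ] using this

end Aux

/-- Let `w 0, …, w (n-1) ∈ ℤⁿ` be linearly independent over `ℚ`. Let `A` be the
subgroup of `ℤⁿ` generated by the first `n - 1` of them, `M` its saturation
(the intersection of their ℚ-span with `ℤⁿ`), and `B` the subgroup generated by
all `n` of them. Then the index `[M : A]` is finite and divides the finite index
`[ℤⁿ : B]`. -/
theorem mult_facet_divides_mult_cone (n : ℕ) (hn : 1 ≤ n)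
    (w : Fin n → (Fin n → ℤ))
    (hindep : LinearIndependent ℚ (fun i => fun j => ((w i j : ℚ))))
    (A B M : AddSubgroup (Fin n → ℤ))
    (hA : A = AddSubgroup.closure (w '' {i : Fin n | (i : ℕ) < n - 1}))
    (hB : B = AddSubgroup.closure (Set.range w))
    (hM : ∀ x : Fin n → ℤ, x ∈ M ↔
      (fun j => (x j : ℚ)) ∈ Submodule.span ℚ
        ((fun y : Fin n → ℤ => fun j => ((y j : ℚ))) '' (w '' {i : Fin n | (i : ℕ) < n - 1}))) :
    A.relIndex M ≠ 0 ∧ B.index ≠ 0 ∧ A.relIndex M ∣ B.index := by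
  classical
  set f := coeMapQ n with hf
  set g : Fin n → (Fin n → ℚ) := fun i => f (w i) with hgdef
  have hg : LinearIndependent ℚ g := hindep
  set S : Set (Fin n) := {i : Fin n | (i : ℕ) < n - 1} with hS
  have himg : (fun y : Fin n → ℤ => fun j => ((y j : ℚ))) '' (w '' S) = g '' S := by
    rw [Set.image_image]
    rfl
  have hM' : ∀ x : Fin n → ℤ, x ∈ M ↔ f x ∈ Submodule.span ℚ (g '' S) := by
    intro x
    rw [hM x, himg]
    rfl
  set last : Fin n := ⟨n - 1, by omega⟩ with hlast
  have hlast_not_S : last ∉ S := by simp [hS, hlast]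
  have hne_last_mem : ∀ i : Fin n, i ≠ last → i ∈ S := by
    intro i hi
    have : (i : ℕ) ≠ n - 1 := fun h => hi (Fin.ext h)
    have := i.isLt
    simp only [hS, Set.mem_setOf_eq]
    omega
  -- A ≤ B
  have hAB : A ≤ B := by
    rw [hA, hB]
    exact AddSubgroup.closure_mono (Set.image_subset_range w S)
  -- A ≤ M
  have hAM : A ≤ M := by
    rw [hA]
    rw [AddSubgroup.closure_le]
    intro x hx
    rw [SetLike.mem_coe, hM' x]
    obtain ⟨i, hi, rfl⟩ := hx
    exact Submodule.subset_span ⟨i, hi, rfl⟩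
  -- key: B ⊓ M = A
  have hBM : B ⊓ M = A := by
    refine le_antisymm ?_ (le_inf hAB hAM)
    rintro x ⟨hxB, hxM⟩
    rw [hB, ← Submodule.span_int_eq_addSubgroupClosure] at hxB
    have hxB' : x ∈ Submodule.span ℤ (Set.range w) := hxB
    obtain ⟨c, hc⟩ := (Submodule.mem_span_range_iff_exists_fun ℤ).mp hxB'
    have hxM' : f x ∈ Submodule.span ℚ (g '' S) := (hM' x).mp hxM
    have hfx : f x = ∑ i, (c i : ℚ) • g i := by
      rw [← hc, map_sum]
      congr 1
      funext i
      rw [map_zsmul, Int.cast_smul_eq_zsmul]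
    -- show the last coefficient vanishes
    have hclast : c last = 0 := by
      by_contra h0
      have hrest : ∑ i ∈ Finset.univ.erase last, (c i : ℚ) • g i ∈
          Submodule.span ℚ (g '' S) := by
        refine Submodule.sum_mem _ fun i hi => ?_
        refine Submodule.smul_mem _ _ (Submodule.subset_span ?_)
        exact Set.mem_image_of_mem _ (hne_last_mem i (Finset.ne_of_mem_erase hi))
      have hsplit : (c last : ℚ) • g last =
          f x - ∑ i ∈ Finset.univ.erase last, (c i : ℚ) • g i := by
        rw [hfx, ← Finset.add_sum_erase _ _ (Finset.mem_univ last)]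
        ring
      have hmem : (c last : ℚ) • g last ∈ Submodule.span ℚ (g '' S) := by
        rw [hsplit]; exact Submodule.sub_mem _ hxM' hrest
      have : g last ∈ Submodule.span ℚ (g '' S) := by
        have := Submodule.smul_mem _ ((c last : ℚ))⁻¹ hmem
        rwa [inv_smul_smul₀ (by exact_mod_cast h0)] at this
      exact hg.notMem_span_image hlast_not_S this
    -- hence x lies in the span of the first n-1 vectors
    have hxA : x ∈ Submodule.span ℤ (w '' S) := by
      rw [← hc, ← Finset.add_sum_erase _ _ (Finset.mem_univ last), hclast, zero_smul,
        zero_add]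
      refine Submodule.sum_mem _ fun i hi => ?_
      exact Submodule.smul_mem _ _ (Submodule.subset_span
        (Set.mem_image_of_mem _ (hne_last_mem i (Finset.ne_of_mem_erase hi))))
    rw [hA, ← Submodule.span_int_eq_addSubgroupClosure]
    exact hxA
  -- finiteness of the index of B
  set p : Submodule ℤ (Fin n → ℤ) := Submodule.span ℤ (Set.range w) with hp
  have hpB : p.toAddSubgroup = B := by
    rw [hp, Submodule.span_int_eq_addSubgroupClosure, hB]
  haveI : Nonempty (Fin n) := ⟨last⟩
  have hspan_top : Submodule.span ℚ (Set.range g) = ⊤ := by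
    apply hg.span_eq_top_of_card_eq_finrank
    simp [Module.finrank_fintype_fun_eq_card]
  have htor : Module.IsTorsion ℤ ((Fin n → ℤ) ⧸ p) := by
    intro q
    obtain ⟨y, rfl⟩ := Submodule.Quotient.mk_surjective p q
    have hy : f y ∈ Submodule.span ℚ (Set.range g) := by rw [hspan_top]; trivial
    obtain ⟨t, ht⟩ := (Submodule.mem_span_range_iff_exists_fun ℚ).mp hy
    obtain ⟨b, hb⟩ := IsLocalization.exist_integer_multiples_of_finite
      (nonZeroDivisors ℤ) t
    choose d hd using hb
    refine ⟨b, ?_⟩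
    have hby : (b : ℤ) • y = ∑ i, d i • w i := by
      apply coeMapQ_injective n
      rw [map_sum, map_zsmul]
      have : (b : ℤ) • f y = ∑ i, (b : ℤ) • (t i • g i) := by
        rw [← Finset.smul_sum, ht]
      rw [this]
      congr 1
      funext i
      rw [← smul_assoc, ← hd i, algebraMap_smul, map_zsmul]
    have hmk : Submodule.Quotient.mk ((b : ℤ) • y) = (0 : (Fin n → ℤ) ⧸ p) := by
      rw [Submodule.Quotient.mk_eq_zero, hby]
      exact Submodule.sum_mem _ fun i _ =>
        Submodule.smul_mem _ _ (Submodule.subset_span (Set.mem_range_self i))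
    rw [Submonoid.smul_def, ← Submodule.Quotient.mk_smul]
    exact hmk
  have hfin : Finite ((Fin n → ℤ) ⧸ p) := Module.finite_of_fg_torsion _ htor
  have hfinB : Finite ((Fin n → ℤ) ⧸ B) := by
    rw [← hpB]
    exact hfin
  have hBidx : B.index ≠ 0 := @AddSubgroup.index_ne_zero_of_finite _ _ _ hfinB
  have hdvd : A.relIndex M ∣ B.index := by
    rw [← hBM, AddSubgroup.inf_relIndex_right]
    exact AddSubgroup.relIndex_dvd_index_of_normal B M
  refine ⟨fun h0 => hBidx ?_, hBidx, hdvd⟩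
  rw [h0] at hdvd
  exact zero_dvd_iff.mp hdvd
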